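/- Let g : ℝ^d → ℝ be a convex differentiable function whose gradient is bounded in Euclidean norm by B > 0 everywhere and is L-Lipschitz continuous. Let C_1, …, C_N ⊆ ℝ^d be convex sets each containing 0 and of diameter at most R, and let {1,…,N} be partitioned into two disjoint sets H (trustworthy) and A (attacked). If points θ_i ∈ C_i for i ∈ H satisfy g((1/N) Σ_{i∈H} θ_i) + (|A|/N)(R·B + (1/2)·L·R²) ≤ 0, then for every choice of points θ_j ∈ C_j for j ∈ A one has g((1/N) Σ_{i=1}^N θ_i) ≤ 0. (In other words, the conservative constraint with additive margin (|A|/N)(RB + LR²/2) implies the worst-case robust constraint over all admissible values of the attacked agents.) -/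

import Mathlib

open Topology

lemma first_order_convex {E : Type*} [NormedAddCommGroup E] [InnerProductSpace ℝ E] [CompleteSpace E]
    {g : E → ℝ} {g' : E → E} (hgrad : ∀ x, HasGradientAt g (g' x) x)
    (hconv : ConvexOn ℝ Set.univ g) (x y : E) :
    g y - g x ≤ inner ℝ (g' y) (y - x) := by
  set v : E := x - y with hv
  have hline : HasDerivAt (fun t : ℝ => g (y + t • v)) (inner ℝ (g' y) v) 0 := by
    have h1 : HasDerivAt (fun t : ℝ => y + t • v) v 0 := by
      simpa using ((hasDerivAt_id (0:ℝ)).smul_const v).const_add y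
    have h2 : HasFDerivAt g (InnerProductSpace.toDual ℝ E (g' y)) (y + (0:ℝ) • v) := by
      simpa using (hgrad y).hasFDerivAt
    have h3 := h2.comp_hasDerivAt 0 h1
    simp at h3
    exact h3
  have hslope : Filter.Tendsto (fun t : ℝ => (g (y + t • v) - g y) / t)
      (𝓝[>] (0:ℝ)) (𝓝 (inner ℝ (g' y) v)) := by
    have := (hasDerivAt_iff_tendsto_slope.mp hline).mono_left
      (nhdsWithin_mono 0 (by intro t ht; exact ne_of_gt ht))
    refine this.congr' ?_
    filter_upwards [self_mem_nhdsWithin] with t ht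
    simp [slope, ht, div_eq_inv_mul]
  have hle : inner ℝ (g' y) v ≤ g x - g y := by
    refine le_of_tendsto hslope ?_
    filter_upwards [Ioo_mem_nhdsGT_of_mem (by norm_num : (0:ℝ) ∈ Set.Ico 0 1)] with t ht
    have ht0 : 0 < t := ht.1
    have ht1 : t < 1 := ht.2
    have hcomb : g (y + t • v) ≤ (1 - t) * g y + t * g x := by
      have := hconv.2 (Set.mem_univ y) (Set.mem_univ x) (by linarith : (0:ℝ) ≤ 1 - t)
        (le_of_lt ht0) (by ring)
      have heq : (1 - t) • y + t • x = y + t • v := by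
        simp only [hv, smul_sub]; module
      simpa [heq, smul_eq_mul] using this
    rw [div_le_iff₀ ht0]
    nlinarith
  have : inner ℝ (g' y) (y - x) = -(inner ℝ (g' y) v : ℝ) := by
    rw [hv, ← inner_neg_right]; congr 1; abel
  linarith [this ▸ (neg_le_neg hle)]


/-- Lemma 1 of the paper: the conservative constraint with additive margin
`(|A|/N)·(R·B + L·R²/2)` implies the worst-case robust constraint over all
admissible values of the attacked agents. -/
theorem conservative_approximation
    (d N : ℕ) (hN : 1 ≤ N) (B L R : ℝ) (hB : 0 < B) (hL : 0 < L) (hR : 0 < R)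
    (g : EuclideanSpace ℝ (Fin d) → ℝ)
    (g' : EuclideanSpace ℝ (Fin d) → EuclideanSpace ℝ (Fin d))
    (hgrad : ∀ x, HasGradientAt g (g' x) x)
    (hconv : ConvexOn ℝ Set.univ g)
    (hgB : ∀ x, ‖g' x‖ ≤ B)
    (hgL : ∀ x y, ‖g' x - g' y‖ ≤ L * ‖x - y‖)
    (C : Fin N → Set (EuclideanSpace ℝ (Fin d)))
    (hCconv : ∀ i, Convex ℝ (C i))
    (hC0 : ∀ i, (0 : EuclideanSpace ℝ (Fin d)) ∈ C i)
    (hCdiam : ∀ i, ∀ x ∈ C i, ∀ y ∈ C i, ‖x - y‖ ≤ R)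
    (H A : Finset (Fin N)) (hdisj : Disjoint H A) (hcover : H ∪ A = Finset.univ)
    (θ : Fin N → EuclideanSpace ℝ (Fin d)) (hθ : ∀ i ∈ H, θ i ∈ C i)
    (hfeas : g ((N : ℝ)⁻¹ • ∑ i ∈ H, θ i)
        + ((A.card : ℝ) / N) * (R * B + (1 / 2) * L * R ^ 2) ≤ 0) :
    ∀ φ : Fin N → EuclideanSpace ℝ (Fin d),
      (∀ i ∈ H, φ i = θ i) → (∀ j ∈ A, φ j ∈ C j) →
      g ((N : ℝ)⁻¹ • ∑ i, φ i) ≤ 0 := by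
  intro φ hφH hφA
  set x := (N : ℝ)⁻¹ • ∑ i ∈ H, θ i with hx
  set y := (N : ℝ)⁻¹ • ∑ i, φ i with hy
  have hNpos : (0:ℝ) < N := by exact_mod_cast hN
  have hsplit : ∑ i, φ i = (∑ i ∈ H, θ i) + ∑ j ∈ A, φ j := by
    rw [← hcover, Finset.sum_union hdisj]
    congr 1
    exact Finset.sum_congr rfl hφH
  have hyx : y - x = (N : ℝ)⁻¹ • ∑ j ∈ A, φ j := by
    rw [hy, hx, hsplit, smul_add]; abel
  have hnormφ : ∀ j ∈ A, ‖φ j‖ ≤ R := by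
    intro j hj
    simpa using hCdiam j (φ j) (hφA j hj) 0 (hC0 j)
  have hnorm : ‖y - x‖ ≤ (A.card : ℝ) * R / N := by
    rw [hyx, norm_smul]
    have h1 : ‖∑ j ∈ A, φ j‖ ≤ (A.card : ℝ) * R := by
      calc ‖∑ j ∈ A, φ j‖ ≤ ∑ j ∈ A, ‖φ j‖ := norm_sum_le _ _
        _ ≤ ∑ _j ∈ A, R := Finset.sum_le_sum hnormφ
        _ = (A.card : ℝ) * R := by simp [mul_comm]
    have : ‖((N:ℝ)⁻¹)‖ = (N:ℝ)⁻¹ := by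
      rw [Real.norm_eq_abs, abs_of_pos (by positivity)]
    rw [this, div_eq_inv_mul]
    exact mul_le_mul_of_nonneg_left h1 (by positivity)
  have hfo : g y - g x ≤ inner ℝ (g' y) (y - x) :=
    first_order_convex hgrad hconv x y
  have hinner : (inner ℝ (g' y) (y - x) : ℝ) ≤ B * ((A.card : ℝ) * R / N) := by
    calc (inner ℝ (g' y) (y - x) : ℝ) ≤ ‖g' y‖ * ‖y - x‖ := real_inner_le_norm _ _
      _ ≤ B * ((A.card : ℝ) * R / N) := by
        apply mul_le_mul (hgB y) hnorm (norm_nonneg _) hB.le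
  have hmargin : B * ((A.card : ℝ) * R / N) ≤
      ((A.card : ℝ) / N) * (R * B + (1 / 2) * L * R ^ 2) := by
    have hA0 : (0:ℝ) ≤ (A.card : ℝ) := by positivity
    have h2 : (0:ℝ) ≤ (1 / 2) * L * R ^ 2 := by positivity
    have : B * ((A.card : ℝ) * R / N) = ((A.card : ℝ) / N) * (R * B) := by ring
    rw [this]
    apply mul_le_mul_of_nonneg_left (by linarith) (by positivity)
  linarith
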